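/- Let P_s ∈ ℝ³ and let Q be any point in the synchronous circle O(P_{s+k}, ε) (so Q.t = P_{s+k}.t and the (x,y)-distance from Q to P_{s+k} is at most ε). Then for each i ∈ [1,k], the synchronized point P'_{s+i} of P_{s+i} w.r.t. segment P_sQ lies inside the cone C(P_s, O(P_{s+k}, ε)); moreover sed(P_{s+i}, P_sQ) ≤ ε for all i if and only if P'_{s+i} ∈ O-cone section, i.e., the segment P_sQ passes through every cone C(P_s, O(P_{s+i}, ε)). -/

import Mathlib

noncomputable section

/-- Points of ℝ³, written (x, y, t) with the third coordinate interpreted as time. -/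
abbrev Pt : Type := EuclideanSpace ℝ (Fin 3)

/-- The time coordinate of a point. -/
def tm (P : Pt) : ℝ := P 2

/-- Spatial (x,y)-Euclidean distance between two points of ℝ³. -/
def sdist (P Q : Pt) : ℝ := Real.sqrt ((P 0 - Q 0)^2 + (P 1 - Q 1)^2)

/-- The synchronized point of `P` w.r.t. the segment from `Ps` to `E`:
linear interpolation with coefficient `c = (P.t - Ps.t)/(E.t - Ps.t)`. -/
def sync (Ps E P : Pt) : Pt := Ps + ((tm P - tm Ps) / (tm E - tm Ps)) • (E - Ps)

/-- The synchronous Euclidean distance of `P` to the segment from `Ps` to `E`. -/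
def sed (P Ps E : Pt) : ℝ := dist P (sync Ps E P)

/-- The spatio-temporal cone with apex `Ps` over the disk of radius `ε`
centered at `C` in the plane `X.t = C.t`: the union of all segments from `Ps`
to points of that disk. -/
def cone (Ps C : Pt) (ε : ℝ) : Set Pt :=
  {X | ∃ Z : Pt, tm Z = tm C ∧ sdist Z C ≤ ε ∧ X ∈ segment ℝ Ps Z}

lemma dist_eq_sdist {X Y : Pt} (h : tm X = tm Y) : dist Y X = sdist X Y := by
  rw [EuclideanSpace.dist_eq, sdist, Fin.sum_univ_three]
  have h2 : Y 2 = X 2 := h.symm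
  simp only [Real.dist_eq, sq_abs, h2]
  congr 1
  ring

/-- for Q in the synchronous circle O(P_{s+k}, ε), every synchronized
point of P_{s+i} w.r.t. segment P_sQ lies in the cone C(P_s, O(P_{s+k}, ε)); and
sed(P_{s+i}, P_sQ) ≤ ε for all i iff the segment P_sQ passes through every cone
C(P_s, O(P_{s+i}, ε)), i.e. each synchronized point lies in the corresponding cone. -/
theorem stmt11 (k : ℕ) (hk : 1 ≤ k) (P : ℕ → Pt)
    (hmono : ∀ i j : ℕ, i < j → j ≤ k → tm (P i) < tm (P j))
    (ε : ℝ) (hε : 0 < ε) (Q : Pt) (hQt : tm Q = tm (P k)) (hQd : sdist Q (P k) ≤ ε) :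
    (∀ i : ℕ, 1 ≤ i → i ≤ k → sync (P 0) Q (P i) ∈ cone (P 0) (P k) ε) ∧
    ((∀ i : ℕ, 1 ≤ i → i ≤ k → sed (P i) (P 0) Q ≤ ε) ↔
      (∀ i : ℕ, 1 ≤ i → i ≤ k → sync (P 0) Q (P i) ∈ cone (P 0) (P i) ε)) := by
  have h0k : tm (P 0) < tm (P k) := hmono 0 k hk le_rfl
  have hd : (0:ℝ) < tm Q - tm (P 0) := by rw [hQt]; linarith
  have htQ : tm Q ≠ tm (P 0) := by intro h; rw [h] at hd; simp at hd
  have hseg : ∀ i : ℕ, 1 ≤ i → i ≤ k → sync (P 0) Q (P i) ∈ segment ℝ (P 0) Q := by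
    intro i h1 h2
    have h0i : tm (P 0) < tm (P i) := hmono 0 i h1 h2
    have hik : tm (P i) ≤ tm (P k) := by
      rcases lt_or_eq_of_le h2 with h | h
      · exact (hmono i k h le_rfl).le
      · rw [h]
    rw [segment_eq_image']
    refine ⟨(tm (P i) - tm (P 0)) / (tm Q - tm (P 0)), ⟨?_, ?_⟩, rfl⟩
    · apply div_nonneg _ hd.le; linarith
    · rw [div_le_one hd, hQt]; linarith
  have htsync : ∀ i : ℕ, 1 ≤ i → i ≤ k → tm (sync (P 0) Q (P i)) = tm (P i) := by
    intro i h1 h2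
    have hne : Q 2 - P 0 2 ≠ 0 := by
      unfold tm at htQ; intro h; apply htQ; linarith
    unfold sync tm
    simp only [PiLp.add_apply, PiLp.smul_apply, PiLp.sub_apply, smul_eq_mul]
    field_simp
    ring
  constructor
  · intro i h1 h2
    exact ⟨Q, hQt, hQd, hseg i h1 h2⟩
  · constructor
    · intro hsed i h1 h2
      refine ⟨sync (P 0) Q (P i), htsync i h1 h2, ?_, right_mem_segment ℝ _ _⟩
      rw [← dist_eq_sdist (htsync i h1 h2)]
      exact hsed i h1 h2
    · intro hcone i h1 h2
      obtain ⟨Z, hZt, hZd, hS⟩ := hcone i h1 h2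
      rw [segment_eq_image'] at hS
      obtain ⟨a, ⟨ha0, ha1⟩, haS⟩ := hS
      have h0i : tm (P 0) < tm (P i) := hmono 0 i h1 h2
      have hcomp : P 0 2 + a * (Z 2 - P 0 2) = sync (P 0) Q (P i) 2 := by
        rw [← haS]
        simp [PiLp.add_apply, PiLp.smul_apply, PiLp.sub_apply]
      have hS2 : sync (P 0) Q (P i) 2 = P i 2 := htsync i h1 h2
      have hZ2 : Z 2 = P i 2 := hZt
      have ha : a = 1 := by
        unfold tm at h0i
        have : (a - 1) * (P i 2 - P 0 2) = 0 := by
          rw [hS2, hZ2] at hcomp; linarith [hcomp]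
        rcases mul_eq_zero.mp this with h | h
        · linarith
        · linarith
      have hSZ : sync (P 0) Q (P i) = Z := by
        rw [← haS, ha]; simp
      rw [sed, hSZ]
      calc dist (P i) Z = sdist Z (P i) := dist_eq_sdist hZt
        _ ≤ ε := hZd
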